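/- For positive reals φ, ψ and β ∈ ℝ \ {0,1}, define s_β(φ,ψ) := (1/(β−1))·(φ^β − φ·ψ^(β−1)) − (1/β)·(φ^β − ψ^β). Then the limit as β → 1 of s_β(φ,ψ) equals φ·(log φ − log ψ) − φ + ψ (the Kullback–Leibler integrand). -/

import Mathlib

open Filter Topology

theorem scalar_beta_divergence_tendsto_KL (φ ψ : ℝ) (hφ : 0 < φ) (hψ : 0 < ψ) :
    Tendsto (fun β : ℝ =>
        (1 / (β - 1)) * (φ ^ β - φ * ψ ^ (β - 1)) - (1 / β) * (φ ^ β - ψ ^ β))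
      (𝓝[≠] 1) (𝓝 (φ * (Real.log φ - Real.log ψ) - φ + ψ)) := by
  set f : ℝ → ℝ := fun β => φ ^ β - φ * ψ ^ (β - 1)
  have hd : HasDerivAt f (φ * Real.log φ - φ * Real.log ψ) 1 := by
    have a := (Real.hasStrictDerivAt_const_rpow hφ 1).hasDerivAt
    have b0 : HasDerivAt (fun x : ℝ => ψ ^ x) (Real.log ψ) ((1:ℝ) - 1) := by
      simpa using (Real.hasStrictDerivAt_const_rpow hψ 0).hasDerivAt
    have b := b0.comp_sub_const 1 1
    simp only [id, sub_self, Real.rpow_zero, Real.rpow_one, mul_one, one_mul] at a b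
    have := a.sub (b.const_mul φ)
    exact this
  have hf1 : f 1 = 0 := by simp [f]
  have hA : Tendsto (fun β => (1 / (β - 1)) * f β) (𝓝[≠] 1)
      (𝓝 (φ * Real.log φ - φ * Real.log ψ)) := by
    have := hasDerivAt_iff_tendsto_slope.mp hd
    refine this.congr fun β => ?_
    simp [slope_def_field, hf1, div_eq_inv_mul, one_div]
  have hB : Tendsto (fun β : ℝ => (1 / β) * (φ ^ β - ψ ^ β)) (𝓝[≠] 1)
      (𝓝 (φ - ψ)) := by
    have hc : ContinuousAt (fun β : ℝ => (1 / β) * (φ ^ β - ψ ^ β)) 1 := by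
      apply ContinuousAt.mul
      · exact (continuousAt_const.div continuousAt_id one_ne_zero)
      · exact ((Real.continuousAt_const_rpow hφ.ne').sub
          (Real.continuousAt_const_rpow hψ.ne'))
    have := hc.tendsto.mono_left (nhdsWithin_le_nhds (s := {(1:ℝ)}ᶜ))
    simpa using this
  have := hA.sub hB
  convert this using 2
  ring
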